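/- Let F_A, F_B ∈ ℝ^{d×N} and W^A, W^B ∈ ℝ^{d×d}, and suppose G := F_A F_Aᵀ + F_B F_Bᵀ is invertible. Then W_R := (W^A F_A F_Aᵀ + W^B F_B F_Bᵀ) G⁻¹ is the unique minimizer over W ∈ ℝ^{d×d} of the RegMean objective ‖W F_A − W^A F_A‖_F² + ‖W F_B − W^B F_B‖_F², where ‖·‖_F is the Frobenius norm. -/
import Mathlib


open Matrix

/-- Squared Frobenius norm of a real matrix. -/
def frobSq {m n : Type*} [Fintype m] [Fintype n] (A : Matrix m n ℝ) : ℝ :=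
  ∑ i, ∑ j, (A i j) ^ 2

lemma frobSq_nonneg {m n : Type*} [Fintype m] [Fintype n] (A : Matrix m n ℝ) :
    0 ≤ frobSq A :=
  Finset.sum_nonneg fun _ _ => Finset.sum_nonneg fun _ _ => sq_nonneg _

lemma frobSq_eq_zero {m n : Type*} [Fintype m] [Fintype n] {A : Matrix m n ℝ}
    (h : frobSq A = 0) : A = 0 := by
  ext i j
  have h1 := (Finset.sum_eq_zero_iff_of_nonneg
    (fun i _ => Finset.sum_nonneg fun j _ => sq_nonneg (A i j))).mp h i (Finset.mem_univ i)
  have h2 := (Finset.sum_eq_zero_iff_of_nonneg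
    (fun j _ => sq_nonneg (A i j))).mp h1 j (Finset.mem_univ j)
  simpa using pow_eq_zero_iff (n := 2) (by norm_num) |>.mp h2

lemma frobSq_eq_trace {m n : Type*} [Fintype m] [Fintype n] (A : Matrix m n ℝ) :
    frobSq A = Matrix.trace (A * Aᵀ) := by
  simp [frobSq, Matrix.trace, Matrix.mul_apply, Matrix.diag, sq]

lemma trace_mul_transpose_comm {m n : Type*} [Fintype m] [Fintype n]
    (X Y : Matrix m n ℝ) : Matrix.trace (Y * Xᵀ) = Matrix.trace (X * Yᵀ) := by
  rw [← Matrix.trace_transpose (Y * Xᵀ), Matrix.transpose_mul, Matrix.transpose_transpose]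

lemma frobSq_add {m n : Type*} [Fintype m] [Fintype n] (X Y : Matrix m n ℝ) :
    frobSq (X + Y) = frobSq X + 2 * Matrix.trace (X * Yᵀ) + frobSq Y := by
  have h : Matrix.trace (X * Yᵀ) = ∑ i, ∑ j, X i j * Y i j := by
    simp [Matrix.trace, Matrix.mul_apply, Matrix.diag]
  have hsq : ∀ i j, (X i j + Y i j) ^ 2
      = X i j ^ 2 + 2 * (X i j * Y i j) + Y i j ^ 2 := by intros; ring
  simp_rw [frobSq, Matrix.add_apply, hsq, Finset.sum_add_distrib, h, Finset.mul_sum]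

/-- The RegMean closed-form solution is the unique minimizer of the RegMean objective. -/
theorem regmean_unique_minimizer
    (d N : ℕ) (FA FB : Matrix (Fin d) (Fin N) ℝ) (WA WB : Matrix (Fin d) (Fin d) ℝ)
    (hG : IsUnit (FA * FAᵀ + FB * FBᵀ)) :
    let G := FA * FAᵀ + FB * FBᵀ
    let WR := (WA * (FA * FAᵀ) + WB * (FB * FBᵀ)) * G⁻¹
    ∀ W : Matrix (Fin d) (Fin d) ℝ, W ≠ WR →
      frobSq (WR * FA - WA * FA) + frobSq (WR * FB - WB * FB)
        < frobSq (W * FA - WA * FA) + frobSq (W * FB - WB * FB) := by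
  intro G WR W hW
  have hGdet : IsUnit G.det := (Matrix.isUnit_iff_isUnit_det G).mp hG
  have hWRG : WR * G = WA * (FA * FAᵀ) + WB * (FB * FBᵀ) := by
    show (WA * (FA * FAᵀ) + WB * (FB * FBᵀ)) * G⁻¹ * G = _
    rw [mul_assoc, Matrix.nonsing_inv_mul G hGdet, mul_one]
  set D := W - WR with hD
  have hDne : D ≠ 0 := sub_ne_zero_of_ne hW
  have hA : W * FA - WA * FA = D * FA + (WR * FA - WA * FA) := by
    rw [hD, Matrix.sub_mul]; abel
  have hB : W * FB - WB * FB = D * FB + (WR * FB - WB * FB) := by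
    rw [hD, Matrix.sub_mul]; abel
  have hbracket : FA * (WR * FA - WA * FA)ᵀ + FB * (WR * FB - WB * FB)ᵀ
      = (WR * G - (WA * (FA * FAᵀ) + WB * (FB * FBᵀ)))ᵀ := by
    show _ = (WR * (FA * FAᵀ + FB * FBᵀ) - _)ᵀ
    simp only [Matrix.transpose_sub, Matrix.transpose_add, Matrix.transpose_mul,
      Matrix.transpose_transpose, Matrix.mul_sub, Matrix.mul_add, ← Matrix.mul_assoc]
    abel
  rw [hWRG, sub_self, Matrix.transpose_zero] at hbracket
  have hcross : Matrix.trace (D * FA * (WR * FA - WA * FA)ᵀ)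
      + Matrix.trace (D * FB * (WR * FB - WB * FB)ᵀ) = 0 := by
    rw [Matrix.mul_assoc D FA, Matrix.mul_assoc D FB, ← Matrix.trace_add, ← Matrix.mul_add,
      hbracket, Matrix.mul_zero, Matrix.trace_zero]
  rw [hA, hB, frobSq_add, frobSq_add]
  have hpos : 0 < frobSq (D * FA) + frobSq (D * FB) := by
    rcases lt_or_eq_of_le (add_nonneg (frobSq_nonneg (D * FA)) (frobSq_nonneg (D * FB))) with h | h
    · exact h
    · exfalso
      have hA0 : frobSq (D * FA) = 0 :=
        le_antisymm (by nlinarith [frobSq_nonneg (D * FB)]) (frobSq_nonneg _)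
      have hB0 : frobSq (D * FB) = 0 := by linarith
      have hDA : D * FA = 0 := frobSq_eq_zero hA0
      have hDB : D * FB = 0 := frobSq_eq_zero hB0
      have hDG : D * G = 0 := by
        show D * (FA * FAᵀ + FB * FBᵀ) = 0
        rw [Matrix.mul_add, ← Matrix.mul_assoc, ← Matrix.mul_assoc, hDA, hDB,
          Matrix.zero_mul, Matrix.zero_mul, add_zero]
      have : D = 0 := by
        have h := congrArg (· * G⁻¹) hDG
        simpa [mul_assoc, Matrix.mul_nonsing_inv G hGdet] using h
      exact hDne this
  linarith [hcross, frobSq_nonneg (D * FA), frobSq_nonneg (D * FB)]
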